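/- Let E be a representation lying in M_{γ, V_{≤φ}} (i.e. all HN subquotients of E have slope ≤ φ) and let u : P_λ → E be a framing such that Coker(u) lies in M_{γ′, V_{>φ}} (all HN subquotients of slope > φ). If g is an automorphism of E with g ∘ u = u, then g = id. In particular, the action of G_γ on the space of such stable framed representations is free. -/
import Mathlib


section QuiverRep

variable {I : Type*} [Quiver I]

/-- A family of subspaces `p i ⊆ V i` is a subrepresentation if it is preserved by
all the structure maps. -/
def IsSubrep (V : I → Type*) [∀ i, AddCommGroup (V i)] [∀ i, Module ℂ (V i)]
    (f : ∀ ⦃i j : I⦄, (i ⟶ j) → (V i →ₗ[ℂ] V j))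
    (p : ∀ i, Submodule ℂ (V i)) : Prop :=
  ∀ ⦃i j : I⦄ (e : i ⟶ j), ∀ x ∈ p i, f e x ∈ p j

/-- All Harder–Narasimhan subquotients of the representation `(V, f)` have slope
`≤ φ`; equivalently, every nonzero subrepresentation has slope `≤ φ`. -/
noncomputable def SlopesLE (V : I → Type*) [∀ i, AddCommGroup (V i)] [∀ i, Module ℂ (V i)]
    (f : ∀ ⦃i j : I⦄, (i ⟶ j) → (V i →ₗ[ℂ] V j))
    (Z : (I → ℤ) →ₗ[ℤ] ℂ) (φ : ℝ) : Prop :=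
  ∀ p : ∀ i, Submodule ℂ (V i), IsSubrep V f p → p ≠ (fun _ => ⊥) →
    Complex.arg (Z (fun i => (Module.finrank ℂ (p i) : ℤ))) ≤ φ

/-- All Harder–Narasimhan subquotients of the quotient of `(V, f)` by the
subrepresentation `R` have slope `> φ`; equivalently, every nonzero quotient of
`V/R` (i.e. `V/p` for a proper subrepresentation `p ⊇ R`) has slope `> φ`. -/
noncomputable def QuotSlopesGT (V : I → Type*) [∀ i, AddCommGroup (V i)] [∀ i, Module ℂ (V i)]
    (f : ∀ ⦃i j : I⦄, (i ⟶ j) → (V i →ₗ[ℂ] V j))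
    (Z : (I → ℤ) →ₗ[ℤ] ℂ) (R : ∀ i, Submodule ℂ (V i)) (φ : ℝ) : Prop :=
  ∀ p : ∀ i, Submodule ℂ (V i), IsSubrep V f p → (∀ i, R i ≤ p i) →
    p ≠ (fun _ => ⊤) →
    φ < Complex.arg (Z (fun i =>
      (Module.finrank ℂ (V i) : ℤ) - (Module.finrank ℂ (p i) : ℤ)))

end QuiverRep

/-- let `E = (V, fV)` be a representation all of whose HN subquotients
have slope `≤ φ`, and let `u : P_λ → E` be a framing (a morphism from a
representation `P = (U, fU)`) whose cokernel has all HN slopes `> φ`, i.e. the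
quotient of `E` by the subrepresentation `range u` lies in `M_{γ′, V_{>φ}}`.
If `g` is an automorphism of `E` with `g ∘ u = u`, then `g = id`.
(In particular, the action of `G_γ` on stable framed representations is free.) -/
theorem framed_automorphism_is_id
    {I : Type*} [Quiver I] [Fintype I] [DecidableEq I] [∀ i j : I, Fintype (i ⟶ j)]
    (U V : I → Type*)
    [∀ i, AddCommGroup (U i)] [∀ i, Module ℂ (U i)] [∀ i, FiniteDimensional ℂ (U i)]
    [∀ i, AddCommGroup (V i)] [∀ i, Module ℂ (V i)] [∀ i, FiniteDimensional ℂ (V i)]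
    (fU : ∀ ⦃i j : I⦄, (i ⟶ j) → (U i →ₗ[ℂ] U j))
    (fV : ∀ ⦃i j : I⦄, (i ⟶ j) → (V i →ₗ[ℂ] V j))
    (Z : (I → ℤ) →ₗ[ℤ] ℂ) (hZ : ∀ i : I, 0 < (Z (Pi.single i 1)).im)
    (φ : ℝ)
    (hE : SlopesLE V fV Z φ)
    (u : ∀ i, U i →ₗ[ℂ] V i)
    (hu : ∀ ⦃i j : I⦄ (e : i ⟶ j), (u j).comp (fU e) = (fV e).comp (u i))
    (hcoker : QuotSlopesGT V fV Z (fun i => LinearMap.range (u i)) φ)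
    (g : ∀ i, V i →ₗ[ℂ] V i)
    (hgmor : ∀ ⦃i j : I⦄ (e : i ⟶ j), (g j).comp (fV e) = (fV e).comp (g i))
    (hgbij : ∀ i, Function.Bijective (g i))
    (hgu : ∀ i, (g i).comp (u i) = u i) :
    ∀ i, g i = LinearMap.id := by
  set h : ∀ i, V i →ₗ[ℂ] V i := fun i => g i - LinearMap.id with hh
  have hcomm : ∀ ⦃i j : I⦄ (e : i ⟶ j) (x : V i), h j (fV e x) = fV e (h i x) := by
    intro i j e x
    have := congrArg (fun m => m x) (hgmor e)
    simp only [LinearMap.comp_apply] at this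
    simp [hh, LinearMap.sub_apply, this, map_sub]
  by_cases hp : (fun i => LinearMap.ker (h i)) = (fun i => (⊤ : Submodule ℂ (V i)))
  · intro i
    have : LinearMap.ker (h i) = ⊤ := congrFun hp i
    have h0 : h i = 0 := LinearMap.ker_eq_top.mp this
    have : g i - LinearMap.id = 0 := h0
    ext x
    have := congrArg (fun m => m x) this
    simpa [sub_eq_zero] using this
  · exfalso
    -- kernel is a subrep containing range u
    have hker_sub : IsSubrep V fV (fun i => LinearMap.ker (h i)) := by
      intro i j e x hx
      simp only [LinearMap.mem_ker] at hx ⊢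
      rw [hcomm e x, hx, map_zero]
    have hker_ge : ∀ i, LinearMap.range (u i) ≤ LinearMap.ker (h i) := by
      intro i y hy
      obtain ⟨x, rfl⟩ := hy
      have := congrArg (fun m => m x) (hgu i)
      simp only [LinearMap.comp_apply] at this
      simp [hh, LinearMap.sub_apply, this]
    have hgt := hcoker (fun i => LinearMap.ker (h i)) hker_sub hker_ge hp
    -- range is a nonzero subrep
    have hrange_sub : IsSubrep V fV (fun i => LinearMap.range (h i)) := by
      intro i j e y hy
      obtain ⟨x, rfl⟩ := hy
      exact ⟨fV e x, hcomm e x⟩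
    have hrange_ne : (fun i => LinearMap.range (h i)) ≠ (fun i => (⊥ : Submodule ℂ (V i))) := by
      intro hcon
      apply hp
      funext i
      have : LinearMap.range (h i) = ⊥ := congrFun hcon i
      rw [LinearMap.ker_eq_top.mpr (LinearMap.range_eq_bot.mp this)]
    have hle := hE (fun i => LinearMap.range (h i)) hrange_sub hrange_ne
    have hdim : (fun i => (Module.finrank ℂ (LinearMap.range (h i)) : ℤ)) =
        (fun i => (Module.finrank ℂ (V i) : ℤ) - (Module.finrank ℂ (LinearMap.ker (h i)) : ℤ)) := by
      funext i
      have := LinearMap.finrank_range_add_finrank_ker (h i)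
      omega
    rw [hdim] at hle
    exact absurd hle (not_le.mpr hgt)
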